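/- On the maximal single-peaked domain (all preferences for men single-peaked with respect to a fixed order on women, and all preferences for women single-peaked with respect to a fixed order on men, with at least two men and two women), no stable matching rule is strategy-proof. -/

import Mathlib

/-- A one-to-one matching between men `M` and women `W`; `none` means unmatched. -/
structure Matching (M W : Type*) where
  menMatch : M → Option W
  womenMatch : W → Option M
  consistent : ∀ m w, menMatch m = some w ↔ womenMatch w = some m

/-- A preference profile: each man has a strict linear order over `W ∪ {∅}`
(encoded as `Option W`, with `none` the outside option), and each woman over `M ∪ {∅}`. -/
structure Profile (M W : Type*) where
  menPref : M → LinearOrder (Option W)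
  womenPref : W → LinearOrder (Option M)

variable {M W : Type*}

def IndividuallyRational (μ : Matching M W) (P : Profile M W) : Prop :=
  (∀ m, (P.menPref m).le none (μ.menMatch m)) ∧
  (∀ w, (P.womenPref w).le none (μ.womenMatch w))

def Blocks (m : M) (w : W) (μ : Matching M W) (P : Profile M W) : Prop :=
  (P.menPref m).lt (μ.menMatch m) (some w) ∧
  (P.womenPref w).lt (μ.womenMatch w) (some m)

def Stable (μ : Matching M W) (P : Profile M W) : Prop :=
  IndividuallyRational μ P ∧ ∀ m w, ¬ Blocks m w μ P

/-- The men-optimal stable matching: stable, and every man weakly prefers it to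
any stable matching.  This characterizes the outcome of the men-proposing
deferred acceptance (MPDA) algorithm. -/
def MenOptimalStable (μ : Matching M W) (P : Profile M W) : Prop :=
  Stable μ P ∧
    ∀ ν : Matching M W, Stable ν P → ∀ m, (P.menPref m).le (ν.menMatch m) (μ.menMatch m)

/-- The women-optimal stable matching, i.e. the outcome of women-proposing DA. -/
def WomenOptimalStable (μ : Matching M W) (P : Profile M W) : Prop :=
  Stable μ P ∧
    ∀ ν : Matching M W, Stable ν P → ∀ w, (P.womenPref w).le (ν.womenMatch w) (μ.womenMatch w)

def Matching.empty (M W : Type*) : Matching M W :=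
  ⟨fun _ => none, fun _ => none, by intro m w; simp⟩

/-- The men-proposing deferred acceptance rule `D^M`. -/
noncomputable def mpda (P : Profile M W) : Matching M W :=
  letI := Classical.dec (∃ μ : Matching M W, MenOptimalStable μ P)
  if h : ∃ μ : Matching M W, MenOptimalStable μ P then h.choose else Matching.empty M W

/-- The women-proposing deferred acceptance rule `D^W`. -/
noncomputable def wpda (P : Profile M W) : Matching M W :=
  letI := Classical.dec (∃ μ : Matching M W, WomenOptimalStable μ P)
  if h : ∃ μ : Matching M W, WomenOptimalStable μ P then h.choose else Matching.empty M W

/-- A domain of preference profiles: a set of admissible preferences for each agent. -/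
structure Domain (M W : Type*) where
  men : M → Set (LinearOrder (Option W))
  women : W → Set (LinearOrder (Option M))

/-- Membership of a profile in (the product domain generated by) a domain. -/
def Domain.mem (D : Domain M W) (P : Profile M W) : Prop :=
  (∀ m, P.menPref m ∈ D.men m) ∧ (∀ w, P.womenPref w ∈ D.women w)

def Profile.updateMan [DecidableEq M] (P : Profile M W) (m : M)
    (p : LinearOrder (Option W)) : Profile M W :=
  ⟨Function.update P.menPref m p, P.womenPref⟩

def Profile.updateWoman [DecidableEq W] (P : Profile M W) (w : W)
    (p : LinearOrder (Option M)) : Profile M W :=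
  ⟨P.menPref, Function.update P.womenPref w p⟩

/-- A matching rule is stable on a domain if it selects a stable matching at
every profile of the domain. -/
def StableOn (D : Domain M W) (φ : Profile M W → Matching M W) : Prop :=
  ∀ P, D.mem P → Stable (φ P) P

/-- Strategy-proofness on a domain: no single agent can strictly gain by
misreporting an admissible preference. -/
def StrategyProofOn [DecidableEq M] [DecidableEq W] (D : Domain M W)
    (φ : Profile M W → Matching M W) : Prop :=
  ∀ P, D.mem P →
    (∀ m p, p ∈ D.men m →
      (P.menPref m).le ((φ (P.updateMan m p)).menMatch m) ((φ P).menMatch m)) ∧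
    (∀ w p, p ∈ D.women w →
      (P.womenPref w).le ((φ (P.updateWoman w p)).womenMatch w) ((φ P).womenMatch w))

/-- A coalition `(Sm, Sw)` manipulates `φ` at `P` via the admissible profile `Q`
(which agrees with `P` outside the coalition): every coalition member is
strictly better off at `φ Q` than at `φ P` according to true preferences. -/
def Manipulation (D : Domain M W) (φ : Profile M W → Matching M W)
    (P Q : Profile M W) (Sm : Set M) (Sw : Set W) : Prop :=
  D.mem P ∧ D.mem Q ∧
  (∀ m ∉ Sm, Q.menPref m = P.menPref m) ∧
  (∀ w ∉ Sw, Q.womenPref w = P.womenPref w) ∧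
  (∀ m ∈ Sm, (P.menPref m).lt ((φ P).menMatch m) ((φ Q).menMatch m)) ∧
  (∀ w ∈ Sw, (P.womenPref w).lt ((φ P).womenMatch w) ((φ Q).womenMatch w))

/-- Group strategy-proofness on a domain: no nonempty coalition can manipulate. -/
def GroupStrategyProofOn (D : Domain M W) (φ : Profile M W → Matching M W) : Prop :=
  ¬ ∃ (P Q : Profile M W) (Sm : Set M) (Sw : Set W),
      (Sm.Nonempty ∨ Sw.Nonempty) ∧ Manipulation D φ P Q Sm Sw

/-- Top dominance for women. -/
def TopDominanceWomen (D : Domain M W) : Prop :=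
  ∀ w : W, ∀ x : M, ∀ y z : Option M,
    (∃ P ∈ D.women w, P.lt y (some x) ∧ P.lt z y ∧ P.le none y) →
      ¬ ∃ P' ∈ D.women w, P'.lt z (some x) ∧ P'.lt y z ∧ P'.le none z

/-- Top dominance for men. -/
def TopDominanceMen (D : Domain M W) : Prop :=
  ∀ m : M, ∀ x : W, ∀ y z : Option W,
    (∃ P ∈ D.men m, P.lt y (some x) ∧ P.lt z y ∧ P.le none y) →
      ¬ ∃ P' ∈ D.men m, P'.lt z (some x) ∧ P'.lt y z ∧ P'.le none z

/-- Unrestricted top pairs for men. -/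
def UnrestrictedTopPairsMen (D : Domain M W) : Prop :=
  ∀ m : M,
    (∀ w w' : W, w ≠ w' → ∃ P ∈ D.men m, P.lt (some w') (some w) ∧
        ∀ z : Option W, z ≠ some w → z ≠ some w' → P.lt z (some w')) ∧
    (∀ w : W, ∃ P ∈ D.men m, P.lt none (some w) ∧
        ∀ z : Option W, z ≠ some w → z ≠ none → P.lt z none) ∧
    (∃ P ∈ D.men m, ∀ z : Option W, z ≠ none → P.lt z none)

/-- Unrestricted top pairs for women. -/
def UnrestrictedTopPairsWomen (D : Domain M W) : Prop :=
  ∀ w : W,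
    (∀ m m' : M, m ≠ m' → ∃ P ∈ D.women w, P.lt (some m') (some m) ∧
        ∀ z : Option M, z ≠ some m → z ≠ some m' → P.lt z (some m')) ∧
    (∀ m : M, ∃ P ∈ D.women w, P.lt none (some m) ∧
        ∀ z : Option M, z ≠ some m → z ≠ none → P.lt z none) ∧
    (∃ P ∈ D.women w, ∀ z : Option M, z ≠ none → P.lt z none)

/-- Single-peakedness of a preference over `Option α` with respect to a prior
order `ord` on `α`:  moving away from the peak (the most preferred element of
`α`) on either side makes the preference decline. -/
def SinglePeaked {α : Type*} (ord : LinearOrder α) (P : LinearOrder (Option α)) : Prop :=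
  ∀ peak : α, (∀ a : α, P.le (some a) (some peak)) →
    ∀ a b : α, ((ord.le peak a ∧ ord.lt a b) ∨ (ord.lt b a ∧ ord.le a peak)) →
      P.lt (some b) (some a)

/-- The maximal single-peaked domain with respect to orders on men and women. -/
def maximalSinglePeakedDomain (ordM : LinearOrder M) (ordW : LinearOrder W) : Domain M W :=
  ⟨fun _ => {P | SinglePeaked ordW P}, fun _ => {P | SinglePeaked ordM P}⟩

/-- A domain is single-peaked if all admissible preferences are single-peaked. -/
def Domain.SinglePeakedDomain (D : Domain M W) (ordM : LinearOrder M)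
    (ordW : LinearOrder W) : Prop :=
  (∀ m, ∀ P ∈ D.men m, SinglePeaked ordW P) ∧ (∀ w, ∀ P ∈ D.women w, SinglePeaked ordM P)

/-- Anonymity: all men share the same admissible set, and all women do too. -/
def Domain.Anonymous (D : Domain M W) : Prop :=
  (∀ m m' : M, D.men m = D.men m') ∧ (∀ w w' : W, D.women w = D.women w')

/-- Cyclical inclusion for men. -/
def CyclicalInclusionMen (D : Domain M W) : Prop :=
  ∀ m : M,
    (∃ P ∈ D.men m, ∀ z : Option W, z ≠ none → P.lt z none) ∧
    (∀ w w' : W,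
      (∃ P ∈ D.men m, P.lt (some w') (some w) ∧ P.lt none (some w')) →
      (∃ P ∈ D.men m, P.lt (some w) (some w') ∧ P.lt none (some w)))

/-- Cyclical inclusion for women. -/
def CyclicalInclusionWomen (D : Domain M W) : Prop :=
  ∀ w : W,
    (∃ P ∈ D.women w, ∀ z : Option M, z ≠ none → P.lt z none) ∧
    (∀ m m' : M,
      (∃ P ∈ D.women w, P.lt (some m') (some m) ∧ P.lt none (some m')) →
      (∃ P ∈ D.women w, P.lt (some m) (some m') ∧ P.lt none (some m)))

/-- The unrestricted domain: every strict linear order is admissible. -/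
def fullDomain (M W : Type*) : Domain M W :=
  ⟨fun _ => Set.univ, fun _ => Set.univ⟩



set_option linter.unusedSectionVars false

section H
variable {α : Type*} [LinearOrder α] [Fintype α] [DecidableEq α]

def rk (a : α) : ℕ := (Finset.univ.filter (fun x => x < a)).card

lemma rk_lt_rk {a b : α} (h : a < b) : rk a < rk b := by
  apply Finset.card_lt_card
  rw [Finset.ssubset_iff_of_subset]
  · exact ⟨a, by simp [rk, h], by simp [rk]⟩
  · intro x hx
    simp only [rk, Finset.mem_filter, Finset.mem_univ, true_and] at *
    exact hx.trans h

lemma rk_inj : Function.Injective (rk (α := α)) := by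
  intro a b h
  rcases lt_trichotomy a b with hc | hc | hc
  · exact absurd h (rk_lt_rk hc).ne
  · exact hc
  · exact absurd h.symm (rk_lt_rk hc).ne

variable {b1 b2 : α}

lemma rk_b1 (hb1 : ∀ a, b1 ≤ a) : rk b1 = 0 := by
  simp only [rk, Finset.card_eq_zero]
  ext x; simp only [Finset.mem_filter, Finset.mem_univ, true_and, Finset.notMem_empty,
    iff_false]
  exact not_lt.mpr (hb1 x)

lemma rk_b2 (hb1 : ∀ a, b1 ≤ a) (hb2 : ∀ a, a ≠ b1 → b2 ≤ a) (hne : b1 ≠ b2) :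
    rk b2 = 1 := by
  have : (Finset.univ.filter (fun x => x < b2)) = {b1} := by
    ext x
    simp only [Finset.mem_filter, Finset.mem_univ, true_and, Finset.mem_singleton]
    constructor
    · intro hx
      by_contra hxb
      exact absurd hx (not_lt.mpr (hb2 x hxb))
    · rintro rfl
      exact lt_of_le_of_ne (hb1 b2) hne
  simp [rk, this]

lemma one_le_rk (hb1 : ∀ a, b1 ≤ a) {a : α} (h : a ≠ b1) : 1 ≤ rk a := by
  have := rk_lt_rk (lt_of_le_of_ne (hb1 a) (Ne.symm h))
  rw [rk_b1 hb1] at this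
  omega

lemma two_le_rk (hb1 : ∀ a, b1 ≤ a) (hb2 : ∀ a, a ≠ b1 → b2 ≤ a) (hne : b1 ≠ b2)
    {a : α} (h1 : a ≠ b1) (h2 : a ≠ b2) : 2 ≤ rk a := by
  have := rk_lt_rk (lt_of_le_of_ne (hb2 a h1) (Ne.symm h2))
  rw [rk_b2 hb1 hb2 hne] at this
  omega

lemma eq_b1_or_b2 (hb1 : ∀ a, b1 ≤ a) (hb2 : ∀ a, a ≠ b1 → b2 ≤ a) (hne : b1 ≠ b2)
    {a : α} (h : rk a ≤ 1) : a = b1 ∨ a = b2 := by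
  by_contra hc
  push_neg at hc
  have := two_le_rk hb1 hb2 hne hc.1 hc.2
  omega

def fo (g : α → ℕ) (t : ℕ) : Option α → ℕ
  | none => t
  | some a => g a

@[simp] lemma fo_none (g : α → ℕ) (t : ℕ) : fo g t none = t := rfl
@[simp] lemma fo_some (g : α → ℕ) (t : ℕ) (a : α) : fo g t (some a) = g a := rfl

def mkPref (f : Option α → ℕ) (hf : Function.Injective f) : LinearOrder (Option α) :=
  LinearOrder.lift' (fun x => OrderDual.toDual (f x))
    (fun a b h => hf (congrArg OrderDual.ofDual h))

lemma mkPref_le (f : Option α → ℕ) (hf) (x y : Option α) :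
    (mkPref f hf).le x y ↔ f y ≤ f x := Iff.rfl

lemma mkPref_lt (f : Option α → ℕ) (hf) (x y : Option α) :
    (mkPref f hf).lt x y ↔ f y < f x := Iff.rfl

/-- shape with peak `b1`, monotone along rk -/
def gA : α → ℕ := fun a => 2 * rk a
/-- shape with peak `b2`, then `b1`, then the rest -/
def gB (b1 : α) : α → ℕ := fun a => if a = b1 then 2 else 4 * (rk a - 1)
/-- shape for the outside agents (`none` top via t = 0). -/
def gE : α → ℕ := fun a => 2 * rk a + 1

lemma foA_inj {t : ℕ} (ht : Odd t) : Function.Injective (fo (gA (α := α)) t) := by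
  rintro (_ | a) (_ | b) h <;> simp [gA, fo] at h ⊢
  · rw [Nat.odd_iff] at ht; omega
  · rw [Nat.odd_iff] at ht; omega
  · exact rk_inj (by omega)

lemma foE_inj : Function.Injective (fo (gE (α := α)) 0) := by
  rintro (_ | a) (_ | b) h <;> simp [gE, fo] at h ⊢
  · exact rk_inj (by omega)

lemma foB_inj (hb1 : ∀ a, b1 ≤ a) {t : ℕ} (ht : Odd t) :
    Function.Injective (fo (gB b1) t) := by
  have heven : ∀ a : α, ¬ Odd (gB b1 a) := by
    intro a
    simp only [gB]
    split <;> simp [Nat.odd_iff] <;> omega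
  rintro (_ | a) (_ | b) h <;> simp [fo] at h ⊢
  · exact absurd (h ▸ ht) (heven b)
  · exact absurd (h ▸ ht) (heven a)
  · simp only [gB] at h
    split at h <;> split at h
    · rename_i hA hB; rw [hA, hB]
    · rename_i hA hB
      have := one_le_rk hb1 hB
      omega
    · rename_i hA hB
      have := one_le_rk hb1 hA
      omega
    · rename_i hA hB
      have h1 := one_le_rk hb1 hA
      have h2 := one_le_rk hb1 hB
      exact rk_inj (by omega)


section SPX
variable {α : Type*} [inst : LinearOrder α] [Fintype α] [DecidableEq α] {b1 b2 : α}


lemma sp_mono {g : α → ℕ} (hg : ∀ {x y : α}, x < y → g x < g y)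
    (hb1 : ∀ a, b1 ≤ a) {t : ℕ} (hf : Function.Injective (fo g t)) :
    SinglePeaked inst (mkPref (fo g t) hf) := by
  intro p hp a b hab
  have hpb : p = b1 := by
    by_contra h
    have h1 := hg (lt_of_le_of_ne (hb1 p) (Ne.symm h))
    have h2 := hp b1
    rw [mkPref_le] at h2
    simp only [fo_some] at h2
    omega
  rw [hpb] at hab
  rw [mkPref_lt]
  simp only [fo_some]
  rcases hab with ⟨_, h2⟩ | ⟨h1, h2⟩
  · exact hg h2
  · have ha : a = b1 := le_antisymm h2 (hb1 a)
    exact absurd (ha ▸ h1) (not_lt.mpr (hb1 b))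

lemma sp_gB (hb1 : ∀ a, b1 ≤ a) (hb2 : ∀ a, a ≠ b1 → b2 ≤ a) (hne : b1 ≠ b2)
    {t : ℕ} (hf : Function.Injective (fo (gB b1) t)) :
    SinglePeaked inst (mkPref (fo (gB b1) t) hf) := by
  have h12 : b1 < b2 := lt_of_le_of_ne (hb1 b2) hne
  have hrk2 : rk b2 = 1 := rk_b2 hb1 hb2 hne
  intro p hp a b hab
  have hpb : p = b2 := by
    have h2 := hp b2
    rw [mkPref_le] at h2
    simp only [fo_some, gB, if_neg (Ne.symm hne)] at h2
    rw [hrk2] at h2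
    simp only [Nat.sub_self, Nat.mul_zero, Nat.le_zero] at h2
    split at h2
    · omega
    · rename_i hpb1
      rcases eq_b1_or_b2 hb1 hb2 hne (a := p) (by omega) with h | h
      · exact absurd h hpb1
      · exact h
  rw [hpb] at hab
  rw [mkPref_lt]
  simp only [fo_some, gB]
  rcases hab with ⟨h1, h2⟩ | ⟨h1, h2⟩
  · have ha1 : a ≠ b1 := fun h => by rw [h] at h1; exact absurd (lt_of_lt_of_le h12 h1) (lt_irrefl _)
    have hb1' : a < b := h2
    have hbb1 : b ≠ b1 := fun h => by rw [h] at hb1'; exact absurd ((hb1 a).trans_lt hb1') (lt_irrefl _)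
    have hbb2 : b ≠ b2 := fun h => by rw [h] at hb1'; exact absurd (h1.trans_lt hb1') (lt_irrefl _)
    rw [if_neg ha1, if_neg hbb1]
    have ha2 := one_le_rk hb1 ha1
    have hb3 := two_le_rk hb1 hb2 hne hbb1 hbb2
    have := rk_lt_rk h2
    omega
  · have hbb1 : b = b1 := by
      by_contra h
      exact absurd (h1.trans_le h2) (not_lt.mpr (hb2 b h))
    have ha1 : a ≠ b1 := fun h => by
      rw [h, hbb1] at h1; exact absurd h1 (lt_irrefl _)
    have ha2 : a = b2 := le_antisymm h2 (hb2 a ha1)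
    rw [ha2, hbb1, if_neg (Ne.symm hne), if_pos rfl, hrk2]
    omega

noncomputable def prA (t : ℕ) (ht : Odd t) : LinearOrder (Option α) :=
  mkPref (fo gA t) (foA_inj ht)

noncomputable def prB (b1 : α) (hb1 : ∀ a, b1 ≤ a) (t : ℕ) (ht : Odd t) :
    LinearOrder (Option α) :=
  mkPref (fo (gB b1) t) (foB_inj hb1 ht)

noncomputable def prE : LinearOrder (Option α) := mkPref (fo gE 0) foE_inj

lemma prA_le {t ht} (x y : Option α) : (prA t ht).le x y ↔ fo gA t y ≤ fo gA t x := Iff.rfl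
lemma prA_lt {t ht} (x y : Option α) : (prA t ht).lt x y ↔ fo gA t y < fo gA t x := Iff.rfl
lemma prB_le {hb1 t ht} (x y : Option α) :
    (prB b1 hb1 t ht).le x y ↔ fo (gB b1) t y ≤ fo (gB b1) t x := Iff.rfl
lemma prB_lt {hb1 t ht} (x y : Option α) :
    (prB b1 hb1 t ht).lt x y ↔ fo (gB b1) t y < fo (gB b1) t x := Iff.rfl
lemma prE_le (x y : Option α) : (prE).le x y ↔ fo gE 0 y ≤ fo gE 0 x := Iff.rfl

lemma spA (hb1 : ∀ a, b1 ≤ a) (t : ℕ) (ht : Odd t) :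
    SinglePeaked inst (prA t ht) :=
  sp_mono (fun h => by simp only [gA]; have := rk_lt_rk h; omega) hb1 _

lemma spE (hb1 : ∀ a, b1 ≤ a) : SinglePeaked inst (prE (α := α)) :=
  sp_mono (fun h => by simp only [gE]; have := rk_lt_rk h; omega) hb1 _

lemma spB (hb1 : ∀ a, b1 ≤ a) (hb2 : ∀ a, a ≠ b1 → b2 ≤ a) (hne : b1 ≠ b2)
    (t : ℕ) (ht : Odd t) : SinglePeaked inst (prB b1 hb1 t ht) :=
  sp_gB hb1 hb2 hne _

-- IR option lemmas
lemma optE {x : Option α} (h : (prE (α := α)).le none x) : x = none := by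
  rw [prE_le] at h
  match x with
  | none => rfl
  | some a => simp only [fo_some, fo_none, gE] at h; omega

lemma optA3 (hb1 : ∀ a, b1 ≤ a) (hb2 : ∀ a, a ≠ b1 → b2 ≤ a) (hne : b1 ≠ b2)
    {ht : Odd 3} {x : Option α} (h : (prA 3 ht).le none x) :
    x = none ∨ x = some b1 ∨ x = some b2 := by
  rw [prA_le] at h
  match x with
  | none => exact Or.inl rfl
  | some a =>
    simp only [fo_some, fo_none, gA] at h
    rcases eq_b1_or_b2 hb1 hb2 hne (a := a) (by omega) with h' | h'
    · exact Or.inr (Or.inl (by rw [h']))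
    · exact Or.inr (Or.inr (by rw [h']))

lemma optA1 (hb1 : ∀ a, b1 ≤ a) {ht : Odd 1} {x : Option α}
    (h : (prA 1 ht).le none x) : x = none ∨ x = some b1 := by
  rw [prA_le] at h
  match x with
  | none => exact Or.inl rfl
  | some a =>
    simp only [fo_some, fo_none, gA] at h
    right
    have : a = b1 := by
      by_contra hc
      have := one_le_rk hb1 hc
      omega
    rw [this]

lemma optB3 (hb1 : ∀ a, b1 ≤ a) (hb2 : ∀ a, a ≠ b1 → b2 ≤ a) (hne : b1 ≠ b2)
    {ht : Odd 3} {x : Option α} (h : (prB b1 hb1 3 ht).le none x) :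
    x = none ∨ x = some b1 ∨ x = some b2 := by
  rw [prB_le] at h
  match x with
  | none => exact Or.inl rfl
  | some a =>
    simp only [fo_some, fo_none, gB] at h
    split at h
    · rename_i h'; exact Or.inr (Or.inl (by rw [h']))
    · rename_i h'
      have h1 := one_le_rk hb1 h'
      rcases eq_b1_or_b2 hb1 hb2 hne (a := a) (by omega) with h'' | h''
      · exact absurd h'' h'
      · exact Or.inr (Or.inr (by rw [h'']))

lemma optB1 (hb1 : ∀ a, b1 ≤ a) (hb2 : ∀ a, a ≠ b1 → b2 ≤ a) (hne : b1 ≠ b2)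
    {ht : Odd 1} {x : Option α} (h : (prB b1 hb1 1 ht).le none x) :
    x = none ∨ x = some b2 := by
  rw [prB_le] at h
  match x with
  | none => exact Or.inl rfl
  | some a =>
    simp only [fo_some, fo_none, gB] at h
    split at h
    · omega
    · rename_i h'
      have h1 := one_le_rk hb1 h'
      rcases eq_b1_or_b2 hb1 hb2 hne (a := a) (by omega) with h'' | h''
      · exact absurd h'' h'
      · exact Or.inr (by rw [h''])

-- strict preference lemmas
lemma prA_lt_top (hb1 : ∀ a, b1 ≤ a) (hb2 : ∀ a, a ≠ b1 → b2 ≤ a) (hne : b1 ≠ b2)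
    {t : ℕ} {ht : Odd t} {y : Option α} (h : y ≠ some b1) :
    (prA t ht).lt y (some b1) := by
  rw [prA_lt]
  simp only [fo_some, gA, rk_b1 hb1, Nat.mul_zero]
  rw [Nat.odd_iff] at ht
  match y with
  | none => simp only [fo_none]; omega
  | some a =>
    have ha : a ≠ b1 := fun hc => h (by rw [hc])
    have := one_le_rk hb1 ha
    simp only [fo_some, gA]
    omega

lemma prB_lt_top (hb1 : ∀ a, b1 ≤ a) (hb2 : ∀ a, a ≠ b1 → b2 ≤ a) (hne : b1 ≠ b2)
    {t : ℕ} {ht : Odd t} {y : Option α} (h : y ≠ some b2) :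
    (prB b1 hb1 t ht).lt y (some b2) := by
  rw [prB_lt]
  simp only [fo_some, gB, if_neg (Ne.symm hne), rk_b2 hb1 hb2 hne]
  rw [Nat.odd_iff] at ht
  match y with
  | none => simp only [fo_none]; omega
  | some a =>
    have ha : a ≠ b2 := fun hc => h (by rw [hc])
    simp only [fo_some, gB]
    split
    · omega
    · rename_i h'
      have := two_le_rk hb1 hb2 hne h' ha
      omega

lemma prA3_none_lt_b2 (hb1 : ∀ a, b1 ≤ a) (hb2 : ∀ a, a ≠ b1 → b2 ≤ a) (hne : b1 ≠ b2)
    {ht : Odd 3} : (prA 3 ht).lt none (some b2) := by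
  rw [prA_lt]
  simp only [fo_some, fo_none, gA, rk_b2 hb1 hb2 hne]
  omega

lemma prB3_none_lt_b1 (hb1 : ∀ a, b1 ≤ a) {ht : Odd 3} :
    (prB b1 hb1 3 ht).lt none (some b1) := by
  rw [prB_lt]
  simp only [fo_some, fo_none, gB]
  rw [if_pos trivial]
  omega

lemma prB1_none_lt_b2 (hb1 : ∀ a, b1 ≤ a) (hb2 : ∀ a, a ≠ b1 → b2 ≤ a) (hne : b1 ≠ b2)
    {ht : Odd 1} : (prB b1 hb1 1 ht).lt none (some b2) := by
  rw [prB_lt]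
  simp only [fo_some, fo_none, gB, if_neg (Ne.symm hne), rk_b2 hb1 hb2 hne]
  omega

lemma prA1_none_lt_b1 (hb1 : ∀ a, b1 ≤ a) {ht : Odd 1} :
    (prA 1 ht).lt none (some b1) := by
  rw [prA_lt]
  simp only [fo_some, fo_none, gA, rk_b1 hb1]
  omega

lemma prA3_not_b2_le_b1 (hb1 : ∀ a, b1 ≤ a) (hb2 : ∀ a, a ≠ b1 → b2 ≤ a) (hne : b1 ≠ b2)
    {ht : Odd 3} : ¬ (prA 3 ht).le (some b1) (some b2) := by
  intro h
  rw [prA_le] at h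
  simp only [fo_some, gA, rk_b1 hb1, rk_b2 hb1 hb2 hne] at h
  omega

lemma prB3_not_b1_le_b2 (hb1 : ∀ a, b1 ≤ a) (hb2 : ∀ a, a ≠ b1 → b2 ≤ a) (hne : b1 ≠ b2)
    {ht : Odd 3} : ¬ (prB b1 hb1 3 ht).le (some b2) (some b1) := by
  intro h
  rw [prB_le] at h
  simp only [fo_some, gB, if_neg (Ne.symm hne), rk_b2 hb1 hb2 hne] at h
  rw [if_pos trivial] at h
  omega

lemma exists_two (h2 : 2 ≤ Fintype.card α) :
    ∃ b1 b2 : α, (∀ a, b1 ≤ a) ∧ (∀ a, a ≠ b1 → b2 ≤ a) ∧ b1 ≠ b2 := by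
  haveI : Nonempty α := Fintype.card_pos_iff.mp (by omega)
  have hu : (Finset.univ : Finset α).Nonempty := Finset.univ_nonempty
  obtain ⟨b1, hb1u, hb1⟩ : ∃ b1 ∈ (Finset.univ : Finset α), ∀ a ∈ Finset.univ, b1 ≤ a :=
    ⟨Finset.univ.min' hu, Finset.min'_mem _ hu, fun a ha => Finset.min'_le _ a ha⟩
  have hern : ((Finset.univ : Finset α).erase b1).Nonempty := by
    rw [← Finset.card_pos, Finset.card_erase_of_mem (Finset.mem_univ _), Finset.card_univ]
    omega
  obtain ⟨b2, hb2u, hb2⟩ : ∃ b2 ∈ (Finset.univ : Finset α).erase b1,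
      ∀ a ∈ (Finset.univ : Finset α).erase b1, b2 ≤ a :=
    ⟨_, Finset.min'_mem _ hern, fun a ha => Finset.min'_le _ a ha⟩
  refine ⟨b1, b2, fun a => hb1 a (Finset.mem_univ a), fun a ha => ?_, ?_⟩
  · exact hb2 a (Finset.mem_erase.mpr ⟨ha, Finset.mem_univ a⟩)
  · exact fun h => (Finset.mem_erase.mp hb2u).1 h.symm

end SPX

def mkProfile {M W : Type*} [DecidableEq M] [DecidableEq W] (m1 m2 : M) (w1 w2 : W)
    (p1 p2 pe : LinearOrder (Option W)) (q1 q2 qe : LinearOrder (Option M)) : Profile M W :=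
  ⟨fun m => if m = m1 then p1 else if m = m2 then p2 else pe,
   fun w => if w = w1 then q1 else if w = w2 then q2 else qe⟩

/-- on the maximal single-peaked domain (with at least two men and
two women), no stable matching rule is strategy-proof. -/
theorem no_stable_sp_on_maximal_single_peaked [Fintype M] [Fintype W]
    [DecidableEq M] [DecidableEq W]
    (ordM : LinearOrder M) (ordW : LinearOrder W)
    (hM : 2 ≤ Fintype.card M) (hW : 2 ≤ Fintype.card W)
    (phi : Profile M W → Matching M W)
    (hstable : StableOn (maximalSinglePeakedDomain ordM ordW) phi) :
    ¬ StrategyProofOn (maximalSinglePeakedDomain ordM ordW) phi := by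
  intro hSP
  letI : LinearOrder M := ordM
  letI : LinearOrder W := ordW
  obtain ⟨m1, m2, hm1, hm2, hmne⟩ := exists_two (α := M) hM
  obtain ⟨w1, w2, hw1, hw2, hwne⟩ := exists_two (α := W) hW
  have odd1 : Odd 1 := ⟨0, rfl⟩
  have odd3 : Odd 3 := ⟨1, rfl⟩
  -- the true profile
  set Pt : Profile M W := mkProfile m1 m2 w1 w2
      (prA 3 odd3) (prB w1 hw1 3 odd3) prE
      (prB m1 hm1 3 odd3) (prA 3 odd3) prE with hPt
  have eM1 : Pt.menPref m1 = prA 3 odd3 := by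
    simp [hPt, mkProfile]
  have eM2 : Pt.menPref m2 = prB w1 hw1 3 odd3 := by
    simp [hPt, mkProfile, Ne.symm hmne]
  have eW1 : Pt.womenPref w1 = prB m1 hm1 3 odd3 := by
    simp [hPt, mkProfile]
  have eW2 : Pt.womenPref w2 = prA 3 odd3 := by
    simp [hPt, mkProfile, Ne.symm hwne]
  have hPmem : (maximalSinglePeakedDomain ordM ordW).mem Pt := by
    constructor
    · intro m
      show SinglePeaked ordW (Pt.menPref m)
      rw [hPt]
      simp only [mkProfile]
      split_ifs
      · exact spA hw1 3 odd3
      · exact spB hw1 hw2 hwne 3 odd3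
      · exact spE hw1
    · intro w
      show SinglePeaked ordM (Pt.womenPref w)
      rw [hPt]
      simp only [mkProfile]
      split_ifs
      · exact spB hm1 hm2 hmne 3 odd3
      · exact spA hm1 3 odd3
      · exact spE hm1
  obtain ⟨⟨IRm, IRw⟩, hnb⟩ := hstable Pt hPmem
  -- m1 is matched to w1 or w2 at phi Pt
  have hm1match : (phi Pt).menMatch m1 = some w1 ∨ (phi Pt).menMatch m1 = some w2 := by
    have h := IRm m1
    rw [eM1] at h
    rcases optA3 hw1 hw2 hwne h with h0 | h0 | h0
    · exfalso
      apply hnb m1 w2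
      constructor
      · rw [eM1, h0]
        exact prA3_none_lt_b2 hw1 hw2 hwne
      · rw [eW2]
        apply prA_lt_top hm1 hm2 hmne
        intro hc
        have := ((phi Pt).consistent m1 w2).mpr hc
        rw [h0] at this
        exact Option.some_ne_none _ this.symm
    · exact Or.inl h0
    · exact Or.inr h0
  rcases hm1match with hA | hB
  · -- case A : m1 gets w1; woman w1 manipulates via prB m1 hm1 1
    set P' : Profile M W := Pt.updateWoman w1 (prB m1 hm1 1 odd1) with hP'
    have eM1' : P'.menPref m1 = prA 3 odd3 := eM1
    have eM2' : P'.menPref m2 = prB w1 hw1 3 odd3 := eM2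
    have eW1' : P'.womenPref w1 = prB m1 hm1 1 odd1 := by
      simp [hP', Profile.updateWoman]
    have eW2' : P'.womenPref w2 = prA 3 odd3 := by
      rw [hP']
      show Function.update Pt.womenPref w1 _ w2 = _
      rw [Function.update_of_ne (Ne.symm hwne), eW2]
    have hP'mem : (maximalSinglePeakedDomain ordM ordW).mem P' := by
      constructor
      · exact hPmem.1
      · intro w
        show SinglePeaked ordM (P'.womenPref w)
        by_cases hc : w = w1
        · rw [hc, eW1']
          exact spB hm1 hm2 hmne 1 odd1
        · rw [hP']
          show SinglePeaked ordM (Function.update Pt.womenPref w1 _ w)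
          rw [Function.update_of_ne hc]
          exact hPmem.2 w
    obtain ⟨⟨IRm', IRw'⟩, hnb'⟩ := hstable P' hP'mem
    -- all stable matchings at P' give w1 her new top m2
    have hkey : (phi P').womenMatch w1 = some m2 := by
      have h := IRw' w1
      rw [eW1'] at h
      rcases optB1 hm1 hm2 hmne h with h0 | h0
      · exfalso
        have h2 := IRm' m2
        rw [eM2'] at h2
        rcases optB3 hw1 hw2 hwne h2 with h1 | h1 | h1
        · -- m2 unmatched : (m2, w1) blocks
          apply hnb' m2 w1
          constructor
          · rw [eM2', h1]
            exact prB3_none_lt_b1 hw1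
          · rw [eW1', h0]
            exact prB1_none_lt_b2 hm1 hm2 hmne
        · -- m2 matched to w1, contradiction with h0
          have := ((phi P').consistent m2 w1).mp h1
          rw [h0] at this
          exact Option.some_ne_none _ this.symm
        · -- m2 matched to w2
          have hw2m : (phi P').womenMatch w2 = some m2 :=
            ((phi P').consistent m2 w2).mp h1
          have h3 := IRm' m1
          rw [eM1'] at h3
          rcases optA3 hw1 hw2 hwne h3 with h4 | h4 | h4
          · -- m1 unmatched : (m1, w2) blocks
            apply hnb' m1 w2
            constructor
            · rw [eM1', h4]
              exact prA3_none_lt_b2 hw1 hw2 hwne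
            · rw [eW2', hw2m]
              apply prA_lt_top hm1 hm2 hmne
              intro hc
              exact hmne (Option.some_injective _ hc).symm
          · have := ((phi P').consistent m1 w1).mp h4
            rw [h0] at this
            exact Option.some_ne_none _ this.symm
          · have := ((phi P').consistent m1 w2).mp h4
            rw [hw2m] at this
            exact hmne (Option.some_injective _ this.symm)
      · exact h0
    -- strategy-proofness is violated for w1
    have hsp := (hSP Pt hPmem).2 w1 (prB m1 hm1 1 odd1)
      (by exact spB hm1 hm2 hmne 1 odd1)
    rw [← hP'] at hsp
    rw [hkey, ((phi Pt).consistent m1 w1).mp hA, eW1] at hsp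
    exact prB3_not_b1_le_b2 hm1 hm2 hmne hsp
  · -- case B : m1 gets w2; man m1 manipulates via prA 1
    set P' : Profile M W := Pt.updateMan m1 (prA 1 odd1) with hP'
    have eM1' : P'.menPref m1 = prA 1 odd1 := by
      simp [hP', Profile.updateMan]
    have eM2' : P'.menPref m2 = prB w1 hw1 3 odd3 := by
      rw [hP']
      show Function.update Pt.menPref m1 _ m2 = _
      rw [Function.update_of_ne (Ne.symm hmne), eM2]
    have eW1' : P'.womenPref w1 = prB m1 hm1 3 odd3 := eW1
    have eW2' : P'.womenPref w2 = prA 3 odd3 := eW2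
    have hP'mem : (maximalSinglePeakedDomain ordM ordW).mem P' := by
      constructor
      · intro m
        show SinglePeaked ordW (P'.menPref m)
        by_cases hc : m = m1
        · rw [hc, eM1']
          exact spA hw1 1 odd1
        · rw [hP']
          show SinglePeaked ordW (Function.update Pt.menPref m1 _ m)
          rw [Function.update_of_ne hc]
          exact hPmem.1 m
      · exact hPmem.2
    obtain ⟨⟨IRm', IRw'⟩, hnb'⟩ := hstable P' hP'mem
    have hkey : (phi P').menMatch m1 = some w1 := by
      have h := IRm' m1
      rw [eM1'] at h
      rcases optA1 hw1 h with h0 | h0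
      · exfalso
        have h2 := IRw' w1
        rw [eW1'] at h2
        rcases optB3 hm1 hm2 hmne h2 with h1 | h1 | h1
        · -- w1 unmatched : (m1, w1) blocks
          apply hnb' m1 w1
          constructor
          · rw [eM1', h0]
            exact prA1_none_lt_b1 hw1
          · rw [eW1', h1]
            exact prB3_none_lt_b1 hm1
        · have := ((phi P').consistent m1 w1).mpr h1
          rw [h0] at this
          exact Option.some_ne_none _ this.symm
        · -- w1 matched to m2
          have hm2m : (phi P').menMatch m2 = some w1 :=
            ((phi P').consistent m2 w1).mpr h1
          have h3 := IRw' w2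
          rw [eW2'] at h3
          rcases optA3 hm1 hm2 hmne h3 with h4 | h4 | h4
          · -- w2 unmatched : (m2, w2) blocks
            apply hnb' m2 w2
            constructor
            · rw [eM2', hm2m]
              apply prB_lt_top hw1 hw2 hwne
              intro hc
              exact hwne (Option.some_injective _ hc)
            · rw [eW2', h4]
              exact prA3_none_lt_b2 hm1 hm2 hmne
          · have := ((phi P').consistent m1 w2).mpr h4
            rw [h0] at this
            exact Option.some_ne_none _ this.symm
          · have := ((phi P').consistent m2 w2).mpr h4
            rw [hm2m] at this
            exact hwne (Option.some_injective _ this)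
      · exact h0
    have hsp := (hSP Pt hPmem).1 m1 (prA 1 odd1) (by exact spA hw1 1 odd1)
    rw [← hP'] at hsp
    rw [hkey, hB, eM1] at hsp
    exact prA3_not_b2_le_b1 hw1 hw2 hwne hsp
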